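/- Let π be a G-invariant full-support probability on a finite set X, P a π-stationary stochastic matrix, and ν any probability measure on G × G. Then γ((P_la)_ra) ≥ γ(P_da(G,ν)), i.e., the independent-double-average QPQ (Q = (1/|G|)Σ_g U_g) has multiplicative spectral gap at least as large as that of any general double-average. -/

import Mathlib

open Matrix

/-- The permutation matrix of the action of `g`: `(U_g f)(x) = f(g • x)`. -/
noncomputable def permMat {X G : Type*} [Fintype X] [DecidableEq X] [Group G] [MulAction G X]
    (g : G) : Matrix X X ℝ :=
  fun x y => if y = g • x then 1 else 0

/-- The double-average `P_da = Σ_{(g,h)} ν(g,h) U_g P U_h`. -/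
noncomputable def doubleAvg {X G : Type*} [Fintype X] [DecidableEq X] [Fintype G] [Group G]
    [MulAction G X] (ν : G × G → ℝ) (P : Matrix X X ℝ) : Matrix X X ℝ :=
  ∑ p : G × G, ν p • (permMat p.1 * P * permMat p.2)

/-- The uniform group average `Q = (1/|G|) Σ_{g∈G} U_g`. -/
noncomputable def unifAvg (X G : Type*) [Fintype X] [DecidableEq X] [Fintype G] [Group G]
    [MulAction G X] : Matrix X X ℝ :=
  (Fintype.card G : ℝ)⁻¹ • ∑ g : G, permMat g

/-- The `L²(π)` norm of a function. -/
noncomputable def pNorm {X : Type*} [Fintype X] (π f : X → ℝ) : ℝ :=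
  Real.sqrt (∑ x, π x * f x ^ 2)

/-- Operator norm of `K` restricted to `L²₀(π)`. -/
noncomputable def opNorm20 {X : Type*} [Fintype X] (π : X → ℝ) (K : Matrix X X ℝ) : ℝ :=
  ⨆ f : {f : X → ℝ // (∑ x, π x * f x = 0) ∧ pNorm π f ≤ 1}, pNorm π (K.mulVec f.1)

set_option linter.unusedSectionVars false

section A
variable {X G : Type*} [Fintype X] [DecidableEq X] [Fintype G] [Group G] [MulAction G X]

lemma permMat_mulVec (g : G) (f : X → ℝ) :
    permMat (X := X) g *ᵥ f = fun x => f (g • x) := by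
  funext x
  simp [permMat, mulVec, dotProduct]

lemma permMat_mul (g h : G) :
    permMat (X := X) g * permMat h = permMat (h * g) := by
  ext x y
  simp only [permMat, Matrix.mul_apply, ite_mul, one_mul, zero_mul, mul_smul]
  rw [Finset.sum_ite_eq' Finset.univ (g • x) (fun z => if y = h • z then (1:ℝ) else 0)]
  simp

lemma sum_mulVec' {s : Finset G} (A : G → Matrix X X ℝ) (v : X → ℝ) :
    (∑ g ∈ s, A g) *ᵥ v = ∑ g ∈ s, A g *ᵥ v := by
  funext x
  simp [mulVec, dotProduct, Matrix.sum_apply, Finset.sum_mul, Finset.sum_apply]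
  exact Finset.sum_comm

lemma unifAvg_mul_permMat (g : G) :
    unifAvg X G * permMat (X := X) g = unifAvg X G := by
  rw [unifAvg, Matrix.smul_mul, Finset.sum_mul]
  congr 1
  exact Fintype.sum_equiv (Equiv.mulLeft g) _ _ fun h => permMat_mul h g

lemma permMat_mul_unifAvg (g : G) :
    permMat (X := X) g * unifAvg X G = unifAvg X G := by
  rw [unifAvg, Matrix.mul_smul, Finset.mul_sum]
  congr 1
  exact Fintype.sum_equiv (Equiv.mulRight g) _ _ fun h => permMat_mul g h

end A

set_option linter.unusedSectionVars false

section B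
variable {X G : Type*} [Fintype X] [DecidableEq X] [Fintype G] [Group G] [MulAction G X]
variable {π : X → ℝ}

lemma pNorm_eq_norm (hπ : ∀ x, 0 ≤ π x) (f : X → ℝ) :
    pNorm π f = ‖(WithLp.equiv 2 (X → ℝ)).symm (fun x => Real.sqrt (π x) * f x)‖ := by
  rw [EuclideanSpace.norm_eq, pNorm]
  congr 1
  refine Finset.sum_congr rfl fun x _ => ?_
  simp only [WithLp.equiv_symm_apply, WithLp.ofLp_toLp]
  rw [Real.norm_eq_abs, ← sq_abs, abs_mul, mul_pow,
    abs_of_nonneg (Real.sqrt_nonneg _), Real.sq_sqrt (hπ x), sq_abs]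

lemma pNorm_smul (c : ℝ) (f : X → ℝ) : pNorm π (c • f) = |c| * pNorm π f := by
  simp only [pNorm, Pi.smul_apply, smul_eq_mul, mul_pow]
  rw [show ∑ x, π x * (c ^ 2 * f x ^ 2) = c ^ 2 * ∑ x, π x * f x ^ 2 by
    rw [Finset.mul_sum]; exact Finset.sum_congr rfl fun x _ => by ring]
  rw [Real.sqrt_mul (sq_nonneg c), Real.sqrt_sq_eq_abs]

lemma pNorm_sum_le (hπ : ∀ x, 0 ≤ π x) (s : Finset G) (v : G → X → ℝ) :
    pNorm π (∑ g ∈ s, v g) ≤ ∑ g ∈ s, pNorm π (v g) := by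
  have hF : ((WithLp.equiv 2 (X → ℝ)).symm (fun x => Real.sqrt (π x) * (∑ g ∈ s, v g) x)) =
      ∑ g ∈ s, ((WithLp.equiv 2 (X → ℝ)).symm (fun x => Real.sqrt (π x) * v g x)) := by
    have hfun : (fun x => Real.sqrt (π x) * (∑ g ∈ s, v g) x) =
        ∑ g ∈ s, (fun x => Real.sqrt (π x) * v g x) := by
      funext x
      simp [Finset.sum_apply, Finset.mul_sum]
    rw [hfun]
    exact map_sum (WithLp.linearEquiv 2 ℝ (X → ℝ)).symm _ _
  rw [pNorm_eq_norm hπ, hF]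
  exact (norm_sum_le _ _).trans
    (le_of_eq (Finset.sum_congr rfl fun g _ => (pNorm_eq_norm hπ _).symm))

lemma pNorm_permMat_eq (hπinv : ∀ (g : G) (x : X), π (g • x) = π x) (g : G) (f : X → ℝ) :
    pNorm π (permMat g *ᵥ f) = pNorm π f := by
  simp only [pNorm, permMat_mulVec]
  congr 1
  rw [show (∑ x, π x * f (g • x) ^ 2) = ∑ x, π (g • x) * f (g • x) ^ 2 from
    Finset.sum_congr rfl fun x _ => by rw [hπinv]]
  exact Fintype.sum_equiv (MulAction.toPerm g) _ _ fun x => rfl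

lemma pNorm_unifAvg_le (hπinv : ∀ (g : G) (x : X), π (g • x) = π x)
    (hπ : ∀ x, 0 ≤ π x) (f : X → ℝ) :
    pNorm π (unifAvg X G *ᵥ f) ≤ pNorm π f := by
  have hc : (0:ℝ) < Fintype.card G := Nat.cast_pos.mpr Fintype.card_pos
  rw [unifAvg, Matrix.smul_mulVec, sum_mulVec', pNorm_smul,
    abs_of_nonneg (by positivity)]
  calc (Fintype.card G : ℝ)⁻¹ * pNorm π (∑ g : G, permMat g *ᵥ f)
      ≤ (Fintype.card G : ℝ)⁻¹ * ∑ g : G, pNorm π (permMat g *ᵥ f) :=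
        mul_le_mul_of_nonneg_left (pNorm_sum_le hπ _ _) (by positivity)
    _ = (Fintype.card G : ℝ)⁻¹ * ((Fintype.card G : ℝ) * pNorm π f) := by
        rw [Finset.sum_congr rfl fun g _ => pNorm_permMat_eq hπinv g f,
          Finset.sum_const, Finset.card_univ, nsmul_eq_mul]
    _ = pNorm π f := by field_simp

lemma mean_zero_unifAvg (hπinv : ∀ (g : G) (x : X), π (g • x) = π x) (f : X → ℝ)
    (hf : ∑ x, π x * f x = 0) :
    ∑ x, π x * (unifAvg X G *ᵥ f) x = 0 := by
  have key : ∀ g : G, ∑ x, π x * (permMat (X := X) g *ᵥ f) x = 0 := by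
    intro g
    rw [permMat_mulVec]
    have h1 : ∑ x, π x * f (g • x) = ∑ x, π x * f x := by
      rw [show (∑ x, π x * f (g • x)) = ∑ x, π (g • x) * f (g • x) from
        Finset.sum_congr rfl fun x _ => by rw [hπinv]]
      exact Fintype.sum_equiv (MulAction.toPerm g) _ _ fun x => rfl
    simpa [h1] using hf
  rw [unifAvg, Matrix.smul_mulVec, sum_mulVec']
  simp only [Pi.smul_apply, Finset.sum_apply, smul_eq_mul]
  calc ∑ x, π x * ((Fintype.card G : ℝ)⁻¹ * ∑ g : G, (permMat g *ᵥ f) x)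
      = ∑ x, ∑ g : G, (Fintype.card G : ℝ)⁻¹ * (π x * (permMat g *ᵥ f) x) := by
        refine Finset.sum_congr rfl fun x _ => ?_
        rw [Finset.mul_sum, Finset.mul_sum]
        exact Finset.sum_congr rfl fun g _ => by ring
    _ = ∑ g : G, ∑ x, (Fintype.card G : ℝ)⁻¹ * (π x * (permMat g *ᵥ f) x) :=
        Finset.sum_comm
    _ = ∑ g : G, (Fintype.card G : ℝ)⁻¹ * ∑ x, π x * (permMat g *ᵥ f) x := by
        refine Finset.sum_congr rfl fun g _ => ?_
        rw [Finset.mul_sum]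
    _ = 0 := by simp [key]

lemma pNorm_mulVec_le_bound (hπpos : ∀ x, 0 < π x) (M : Matrix X X ℝ) (f : X → ℝ)
    (hf : pNorm π f ≤ 1) :
    pNorm π (M *ᵥ f) ≤
      Real.sqrt (∑ x, π x * (∑ y, |M x y| * (Real.sqrt (π y))⁻¹) ^ 2) := by
  rw [pNorm] at hf
  have hsum : ∑ x, π x * f x ^ 2 ≤ 1 := by
    have h0 : 0 ≤ ∑ x, π x * f x ^ 2 :=
      Finset.sum_nonneg fun x _ => mul_nonneg (hπpos x).le (sq_nonneg _)
    nlinarith [Real.sq_sqrt h0, Real.sqrt_nonneg (∑ x, π x * f x ^ 2), hf]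
  have hfy : ∀ y, |f y| ≤ (Real.sqrt (π y))⁻¹ := by
    intro y
    have hterm : π y * f y ^ 2 ≤ 1 :=
      le_trans (Finset.single_le_sum
        (fun x _ => mul_nonneg (hπpos x).le (sq_nonneg _)) (Finset.mem_univ y)) hsum
    have hsq : f y ^ 2 ≤ (π y)⁻¹ := by
      nlinarith [mul_inv_cancel₀ (hπpos y).ne',
        mul_nonneg (inv_nonneg.mpr (hπpos y).le) (sub_nonneg.mpr hterm)]
    rw [← Real.sqrt_sq_eq_abs, ← Real.sqrt_inv]
    exact Real.sqrt_le_sqrt hsq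
  rw [pNorm]
  apply Real.sqrt_le_sqrt
  apply Finset.sum_le_sum
  intro x _
  refine mul_le_mul_of_nonneg_left ?_ (hπpos x).le
  have hb : |(M *ᵥ f) x| ≤ ∑ y, |M x y| * (Real.sqrt (π y))⁻¹ := by
    refine (Finset.abs_sum_le_sum_abs _ _).trans ?_
    refine Finset.sum_le_sum fun y _ => ?_
    rw [abs_mul]
    exact mul_le_mul_of_nonneg_left (hfy y) (abs_nonneg _)
  calc (M *ᵥ f) x ^ 2 = |(M *ᵥ f) x| ^ 2 := (sq_abs _).symm
    _ ≤ (∑ y, |M x y| * (Real.sqrt (π y))⁻¹) ^ 2 := pow_le_pow_left₀ (abs_nonneg _) hb 2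

lemma opNorm_QMQ_le (hπpos : ∀ x, 0 < π x)
    (hπinv : ∀ (g : G) (x : X), π (g • x) = π x) (M : Matrix X X ℝ) :
    opNorm20 π (unifAvg X G * M * unifAvg X G) ≤ opNorm20 π M := by
  have hπnn : ∀ x, 0 ≤ π x := fun x => (hπpos x).le
  haveI : Nonempty {f : X → ℝ // (∑ x, π x * f x = 0) ∧ pNorm π f ≤ 1} :=
    ⟨⟨0, by simp, by simp [pNorm]⟩⟩
  have hbdd : BddAbove (Set.range fun f : {f : X → ℝ // (∑ x, π x * f x = 0) ∧ pNorm π f ≤ 1}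
      => pNorm π (M *ᵥ f.1)) := by
    refine ⟨Real.sqrt (∑ x, π x * (∑ y, |M x y| * (Real.sqrt (π y))⁻¹) ^ 2), ?_⟩
    rintro r ⟨f, rfl⟩
    exact pNorm_mulVec_le_bound hπpos M f.1 f.2.2
  rw [opNorm20, opNorm20]
  apply ciSup_le
  intro f
  have h1 : (unifAvg X G * M * unifAvg X G) *ᵥ f.1 =
      unifAvg X G *ᵥ (M *ᵥ (unifAvg X G *ᵥ f.1)) := by
    rw [Matrix.mulVec_mulVec, Matrix.mulVec_mulVec]
  rw [h1]
  have hg0 : ∑ x, π x * (unifAvg X G *ᵥ f.1) x = 0 := mean_zero_unifAvg hπinv f.1 f.2.1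
  have hg1 : pNorm π (unifAvg X G *ᵥ f.1) ≤ 1 :=
    (pNorm_unifAvg_le hπinv hπnn f.1).trans f.2.2
  calc pNorm π (unifAvg X G *ᵥ (M *ᵥ (unifAvg X G *ᵥ f.1)))
      ≤ pNorm π (M *ᵥ (unifAvg X G *ᵥ f.1)) := pNorm_unifAvg_le hπinv hπnn _
    _ ≤ _ := le_ciSup hbdd ⟨unifAvg X G *ᵥ f.1, hg0, hg1⟩

end B

/-- the independent double average `QPQ` has multiplicative spectral gap
`γ(K) = 1 - ‖K‖_{L²₀(π)→L²₀(π)}` at least as large as any general double-average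
`P_da(G,ν)`. -/
theorem stmt9 {X G : Type*} [Fintype X] [DecidableEq X] [Fintype G] [Group G] [MulAction G X]
    (π : X → ℝ) (hπpos : ∀ x, 0 < π x) (hπsum : ∑ x, π x = 1)
    (hπinv : ∀ (g : G) (x : X), π (g • x) = π x)
    (P : Matrix X X ℝ) (hPnn : ∀ x y, 0 ≤ P x y) (hProw : ∀ x, ∑ y, P x y = 1)
    (hPstat : ∀ y, ∑ x, π x * P x y = π y)
    (ν : G × G → ℝ) (hνnn : ∀ p, 0 ≤ ν p) (hνsum : ∑ p : G × G, ν p = 1) :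
    1 - opNorm20 π (doubleAvg ν P) ≤
      1 - opNorm20 π (unifAvg X G * P * unifAvg X G) := by
  rw [doubleAvg]
  have key : ∀ p : G × G,
      unifAvg X G * (ν p • (permMat p.1 * P * permMat p.2)) * unifAvg X G =
        ν p • (unifAvg X G * P * unifAvg X G) := by
    intro p
    rw [Matrix.mul_smul, Matrix.smul_mul]
    congr 1
    simp only [← Matrix.mul_assoc]
    rw [unifAvg_mul_permMat, Matrix.mul_assoc, permMat_mul_unifAvg]
  have hQDQ : unifAvg X G * P * unifAvg X G =
      unifAvg X G * (∑ p : G × G, ν p • (permMat p.1 * P * permMat p.2)) * unifAvg X G := by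
    rw [Finset.mul_sum, Finset.sum_mul, Finset.sum_congr rfl fun p _ => key p,
      ← Finset.sum_smul, hνsum, one_smul]
  rw [hQDQ]
  exact sub_le_sub_left (opNorm_QMQ_le hπpos hπinv _) 1
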